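/- For any non-negative integers a and b with b ≤ a, there is no integer s such that 2^b · s² + 2^(a+1) ≡ 0 (mod 2^(a+4)). Equivalently, the congruence 2^b s² ≡ -2^(a+1) (mod 2^(a+4)) has no solutions. -/

import Mathlib

/-- For any non-negative integers `a` and `b` with `b ≤ a`, there is no integer `s` such that
`2^b * s² + 2^(a+1) ≡ 0 (mod 2^(a+4))`. -/
theorem no_solution_two_pow_congruence (a b : ℕ) (hba : b ≤ a) :
    ¬ ∃ s : ℤ, (2 ^ (a + 4) : ℤ) ∣ (2 ^ b * s ^ 2 + 2 ^ (a + 1)) := by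
  rintro ⟨s, hd⟩
  rcases eq_or_ne s 0 with rfl | hs
  · have hd' : (2:ℤ) ^ (a + 4) ∣ 2 ^ (a + 1) := by
      simpa using hd
    have := (pow_dvd_pow_iff (by norm_num : (2:ℤ) ≠ 0)
      (by decide : ¬ IsUnit (2:ℤ))).mp hd'
    omega
  · have hfin : FiniteMultiplicity (2 : ℤ) s :=
      Int.finiteMultiplicity_iff.mpr ⟨by norm_num, hs⟩
    obtain ⟨k, m, hm, rfl⟩ : ∃ k : ℕ, ∃ m : ℤ, ¬ (2:ℤ) ∣ m ∧ s = 2 ^ k * m := by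
      obtain ⟨m, hm⟩ := hfin.exists_eq_pow_mul_and_not_dvd
      exact ⟨_, m, hm.2, hm.1⟩
    have key : (2:ℤ) ^ (a + 4) ∣ 2 ^ (b + 2 * k) * m ^ 2 + 2 ^ (a + 1) := by
      convert hd using 2; ring
    rcases lt_trichotomy (b + 2 * k) (a + 1) with h | h | h
    · -- 2^(b+2k+1) divides both the sum and 2^(a+1), hence divides 2^(b+2k) * m^2
      have h1 : (2:ℤ) ^ (b + 2 * k + 1) ∣ 2 ^ (b + 2 * k) * m ^ 2 := by
        have h2 : (2:ℤ) ^ (b + 2 * k + 1) ∣ 2 ^ (a + 1) := pow_dvd_pow 2 (by omega)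
        have h3 : (2:ℤ) ^ (b + 2 * k + 1) ∣ 2 ^ (b + 2 * k) * m ^ 2 + 2 ^ (a + 1) :=
          dvd_trans (pow_dvd_pow 2 (by omega)) key
        simpa using h3.sub h2
      rw [pow_succ] at h1
      have h4 : (2:ℤ) ∣ m ^ 2 :=
        (mul_dvd_mul_iff_left (by positivity : (2:ℤ) ^ (b + 2 * k) ≠ 0)).mp h1
      exact hm (Int.prime_two.dvd_of_dvd_pow h4)
    · -- b + 2k = a + 1 : sum = 2^(a+1) * (m^2 + 1), need 8 ∣ m^2 + 1 with m odd
      rw [h] at key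
      have h8 : (8:ℤ) ∣ m ^ 2 + 1 := by
        have : (2:ℤ) ^ (a + 1) * 8 ∣ 2 ^ (a + 1) * (m ^ 2 + 1) := by
          have : ((2:ℤ) ^ (a + 1) * 8) = 2 ^ (a + 4) := by ring
          rw [this, mul_add, mul_one]; exact key
        exact (mul_dvd_mul_iff_left (by positivity : (2:ℤ)^(a+1) ≠ 0)).mp this
      obtain ⟨t, rfl⟩ : ∃ t, m = 2 * t + 1 := by
        rcases Int.even_or_odd m with he | ho
        · exact absurd he.two_dvd hm
        · exact ho
      obtain ⟨c, hc⟩ := h8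
      have : (2 * t + 1) ^ 2 + 1 = 4 * (t * t + t) + 2 := by ring
      rw [this] at hc
      omega
    · -- b + 2k ≥ a + 2 : then 2^(a+2) ∣ 2^(a+1), contradiction
      have h2 : (2:ℤ) ^ (a + 2) ∣ 2 ^ (b + 2 * k) * m ^ 2 :=
        Dvd.dvd.mul_right (pow_dvd_pow 2 (by omega)) _
      have h3 : (2:ℤ) ^ (a + 2) ∣ 2 ^ (a + 1) := by
        have h4 : (2:ℤ) ^ (a + 2) ∣ 2 ^ (b + 2 * k) * m ^ 2 + 2 ^ (a + 1) :=
          dvd_trans (pow_dvd_pow 2 (by omega)) key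
        simpa using h4.sub h2
      have := (pow_dvd_pow_iff (by norm_num : (2:ℤ) ≠ 0)
        (by decide : ¬ IsUnit (2:ℤ))).mp h3
      omega
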